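/- The sequence α(n) = (-1;q)_n / 2^n satisfies E_{q,α}(-z) · E_{q,α}(z) = 1 as formal power series; equivalently, Σ_{k=0}^{2p} C_q(2p,k) (-1)^k ((-1;q)_k/2^k)((-1;q)_{2p-k}/2^{2p-k}) = 0 for all p ≥ 1. -/

import Mathlib

open Finset PowerSeries

noncomputable def qInt (q : ℂ) (n : ℕ) : ℂ := ∑ i ∈ Finset.range n, q ^ i

noncomputable def qFact (q : ℂ) (n : ℕ) : ℂ := ∏ k ∈ Finset.range n, qInt q (k + 1)

noncomputable def qBinom (q : ℂ) (n k : ℕ) : ℂ := qFact q n / (qFact q k * qFact q (n - k))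

noncomputable def alphaPoch (q : ℂ) (n : ℕ) : ℂ :=
  (∏ j ∈ Finset.range n, (1 + q ^ j)) / 2 ^ n

noncomputable def Eqa (q : ℂ) (α : ℕ → ℂ) (x : ℂ) : PowerSeries ℂ :=
  PowerSeries.mk fun n => α n * x ^ n / qFact q n

/- Auxiliary development -/

noncomputable def aP (q : ℂ) (n : ℕ) : ℂ := ∏ j ∈ Finset.range n, (1 + q ^ j)

noncomputable def Bq (q : ℂ) (n k : ℕ) : ℂ := if k ≤ n then qBinom q n k else 0

noncomputable def Sq (q : ℂ) (n : ℕ) : ℂ :=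
  ∑ k ∈ Finset.range (n + 1), Bq q n k * (-1) ^ k * aP q k * aP q (n - k)

section lemmas

variable {q : ℂ} (hroot : ∀ k : ℕ, 1 ≤ k → q ^ k ≠ 1)
include hroot

lemma hq_ne_one : q ≠ 1 := fun h => hroot 1 le_rfl (by simp [h])

omit hroot in
lemma qFact_zero' : qFact q 0 = 1 := Finset.prod_range_zero _

lemma qInt_ne_zero {m : ℕ} (hm : 1 ≤ m) : qInt q m ≠ 0 := by
  rw [qInt, geom_sum_eq (hq_ne_one hroot)]
  exact div_ne_zero (sub_ne_zero.mpr (hroot m hm)) (sub_ne_zero.mpr (hq_ne_one hroot))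

lemma qFact_ne_zero (n : ℕ) : qFact q n ≠ 0 := by
  rw [qFact]
  exact Finset.prod_ne_zero_iff.mpr fun k _ =>
    qInt_ne_zero hroot (Nat.succ_le_succ (Nat.zero_le k))

omit hroot in
lemma qFact_succ (n : ℕ) : qFact q (n + 1) = qFact q n * qInt q (n + 1) :=
  Finset.prod_range_succ _ _

omit hroot in
lemma qInt_add (a b : ℕ) : qInt q (a + b) = qInt q a + q ^ a * qInt q b := by
  rw [qInt, qInt, qInt, Finset.sum_range_add, Finset.mul_sum]
  simp [pow_add]

lemma Bq_zero (n : ℕ) : Bq q n 0 = 1 := by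
  rw [Bq, if_pos (Nat.zero_le n), qBinom]
  simp only [qFact_zero', Nat.sub_zero, one_mul]
  exact div_self (qFact_ne_zero hroot n)

lemma Bq_self (n : ℕ) : Bq q n n = 1 := by
  rw [Bq, if_pos le_rfl, qBinom]
  simp only [Nat.sub_self, qFact_zero', mul_one]
  exact div_self (qFact_ne_zero hroot n)

omit hroot in
lemma pascal_core (A B C x y t : ℂ) (hB : B ≠ 0) (hC : C ≠ 0) (hx : x ≠ 0) (hy : y ≠ 0) :
    A * (x + t * y) / (B * x * (C * y)) = A / (B * (C * y)) + t * (A / (B * x * C)) := by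
  field_simp

lemma Bq_pascal (n k : ℕ) :
    Bq q (n + 1) (k + 1) = Bq q n k + q ^ (k + 1) * Bq q n (k + 1) := by
  rcases lt_trichotomy k n with h | h | h
  · have hk1 : k + 1 ≤ n := h
    rw [Bq, Bq, Bq, if_pos (by omega), if_pos (by omega), if_pos hk1]
    rw [qBinom, qBinom, qBinom]
    have e1 : n + 1 - (k + 1) = n - k := by omega
    have e2 : n - k = n - (k + 1) + 1 := by omega
    have e3 : n - (k + 1) = n - k - 1 := by omega
    have esplit : qInt q (n + 1) = qInt q (k + 1) + q ^ (k + 1) * qInt q (n - k) := by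
      have h' : (k + 1) + (n - k) = n + 1 := by omega
      rw [← h', qInt_add]
    rw [e1, qFact_succ n, esplit, qFact_succ k]
    rw [show qFact q (n - k) = qFact q (n - (k+1)) * qInt q (n - k) from by
      rw [e2, qFact_succ, ← e2]]
    have hx : qInt q (k + 1) ≠ 0 := qInt_ne_zero hroot (by omega)
    have hy : qInt q (n - k) ≠ 0 := qInt_ne_zero hroot (by omega)
    exact pascal_core (qFact q n) (qFact q k) (qFact q (n - (k + 1))) (qInt q (k + 1))
      (qInt q (n - k)) (q ^ (k + 1)) (qFact_ne_zero hroot k)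
      (qFact_ne_zero hroot (n - (k + 1))) hx hy
  · subst h
    rw [Bq_self hroot, Bq_self hroot, show Bq q k (k + 1) = 0 from by rw [Bq, if_neg (by omega)]]
    ring
  · rw [show Bq q (n+1) (k+1) = 0 from by rw [Bq, if_neg (by omega)],
      show Bq q n k = 0 from by rw [Bq, if_neg (by omega)],
      show Bq q n (k+1) = 0 from by rw [Bq, if_neg (by omega)]]
    ring

omit hroot in
lemma aP_succ (n : ℕ) : aP q (n + 1) = aP q n * (1 + q ^ n) := Finset.prod_range_succ _ _

lemma Sq_succ (n : ℕ) : Sq q (n + 1) = (q ^ n - 1) * Sq q n := by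
  have h1 : Sq q (n + 1)
      = (∑ k ∈ Finset.range (n + 1),
            Bq q n k * (-1 : ℂ) ^ (k + 1) * aP q (k + 1) * aP q (n - k))
        + ((∑ k ∈ Finset.range (n + 1),
            q ^ (k + 1) * Bq q n (k + 1) * (-1 : ℂ) ^ (k + 1) * aP q (k + 1) * aP q (n - k))
          + Bq q n 0 * (-1 : ℂ) ^ 0 * aP q 0 * aP q (n + 1)) := by
    rw [Sq, Finset.sum_range_succ']
    rw [show Bq q (n + 1) 0 = Bq q n 0 from by rw [Bq_zero hroot, Bq_zero hroot]]
    rw [← add_assoc, ← Finset.sum_add_distrib]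
    congr 1
    apply Finset.sum_congr rfl
    intro k _
    have e : n + 1 - (k + 1) = n - k := by omega
    rw [e, Bq_pascal hroot]
    ring
  have h2 : (∑ k ∈ Finset.range (n + 1),
            q ^ (k + 1) * Bq q n (k + 1) * (-1 : ℂ) ^ (k + 1) * aP q (k + 1) * aP q (n - k))
          + Bq q n 0 * (-1 : ℂ) ^ 0 * aP q 0 * aP q (n + 1)
      = ∑ k ∈ Finset.range (n + 2),
          q ^ k * Bq q n k * (-1 : ℂ) ^ k * aP q k * aP q (n + 1 - k) := by
    rw [Finset.sum_range_succ'
      (fun k => q ^ k * Bq q n k * (-1 : ℂ) ^ k * aP q k * aP q (n + 1 - k)) (n + 1)]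
    congr 1
    · apply Finset.sum_congr rfl
      intro k _
      have e : n + 1 - (k + 1) = n - k := by omega
      rw [e]
    · simp
  have h3 : ∑ k ∈ Finset.range (n + 2),
          q ^ k * Bq q n k * (-1 : ℂ) ^ k * aP q k * aP q (n + 1 - k)
      = ∑ k ∈ Finset.range (n + 1),
          q ^ k * Bq q n k * (-1 : ℂ) ^ k * aP q k * aP q (n + 1 - k) := by
    rw [Finset.sum_range_succ]
    have hb : Bq q n (n + 1) = 0 := by rw [Bq, if_neg (by omega)]
    simp [hb]
  rw [h1, h2, h3, Sq, Finset.mul_sum, ← Finset.sum_add_distrib]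
  apply Finset.sum_congr rfl
  intro k hk
  have hkn : k ≤ n := by simpa [Nat.lt_succ_iff] using hk
  have e1 : n + 1 - k = (n - k) + 1 := by omega
  have hqq : q ^ k * q ^ (n - k) = q ^ n := by
    rw [← pow_add]; congr 1; omega
  rw [aP_succ, e1, aP_succ]
  linear_combination (Bq q n k * (-1 : ℂ) ^ k * aP q k * aP q (n - k)) * hqq

lemma Sq_eq_zero {n : ℕ} (hn : 1 ≤ n) : Sq q n = 0 := by
  induction n with
  | zero => omega
  | succ m ih =>
    rcases Nat.eq_zero_or_pos m with hm | hm
    · subst hm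
      rw [Sq_succ hroot]
      simp
    · rw [Sq_succ hroot, ih hm, mul_zero]

lemma T_eq_zero {n : ℕ} (hn : 1 ≤ n) :
    ∑ k ∈ Finset.range (n + 1),
      qBinom q n k * (-1) ^ k * alphaPoch q k * alphaPoch q (n - k) = 0 := by
  have key : ∑ k ∈ Finset.range (n + 1),
      qBinom q n k * (-1) ^ k * alphaPoch q k * alphaPoch q (n - k)
      = Sq q n / 2 ^ n := by
    rw [Sq, Finset.sum_div]
    apply Finset.sum_congr rfl
    intro k hk
    have hkn : k ≤ n := by simpa [Nat.lt_succ_iff] using hk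
    rw [Bq, if_pos hkn, alphaPoch, alphaPoch, aP, aP]
    have h2 : (2 : ℂ) ^ n = 2 ^ k * 2 ^ (n - k) := by
      rw [← pow_add]; congr 1; omega
    rw [h2]
    ring
  rw [key, Sq_eq_zero hroot hn, zero_div]

end lemmas

/-- α(n) = (-1;q)_n/2^n satisfies E_{q,α}(-z)E_{q,α}(z) = 1, equivalently the
alternating q-binomial convolution vanishes in every even positive degree. -/
theorem stmt9 (q : ℂ) (hq0 : 0 < ‖q‖) (hq1 : ‖q‖ < 1)
    (hroot : ∀ k : ℕ, 1 ≤ k → q ^ k ≠ 1) :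
    Eqa q (alphaPoch q) (-1) * Eqa q (alphaPoch q) 1 = 1 ∧
      ∀ p : ℕ, 1 ≤ p →
        ∑ k ∈ Finset.range (2 * p + 1),
          qBinom q (2 * p) k * (-1) ^ k * alphaPoch q k * alphaPoch q (2 * p - k) = 0 := by
  constructor
  · ext n
    rw [PowerSeries.coeff_mul, Finset.Nat.sum_antidiagonal_eq_sum_range_succ_mk]
    rcases Nat.eq_zero_or_pos n with hn | hn
    · subst hn
      simp [Eqa, alphaPoch, qFact]
    · have hcoeff : ∀ k ∈ Finset.range (n + 1),
          (PowerSeries.coeff k) (Eqa q (alphaPoch q) (-1)) *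
            (PowerSeries.coeff (n - k)) (Eqa q (alphaPoch q) 1)
          = qBinom q n k * (-1) ^ k * alphaPoch q k * alphaPoch q (n - k) / qFact q n := by
        intro k hk
        have hkn : k ≤ n := by simpa [Nat.lt_succ_iff] using hk
        rw [Eqa, Eqa, PowerSeries.coeff_mk, PowerSeries.coeff_mk, qBinom]
        have hA := qFact_ne_zero hroot k
        have hB := qFact_ne_zero hroot (n - k)
        have hN := qFact_ne_zero hroot n
        field_simp
        ring
      rw [Finset.sum_congr rfl hcoeff, ← Finset.sum_div,
        T_eq_zero hroot hn, zero_div]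
      rw [PowerSeries.coeff_one, if_neg (by omega)]
  · intro p hp
    exact T_eq_zero hroot (by omega)
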